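/- Let σ : ℕ → ℕ be an injection without periodic points. A real matrix A = (a_{n,k}) with sup_n ∑_k |a_{n,k}| < ∞ is σ-regular (i.e., for every convergent bounded sequence x, the transformed sequence A x is σ-convergent to lim x) if and only if: (K2) σ-lim_n ∑_k a_{n,k} = 1, and (K3) σ-lim_n a_{n,k} = 0 for each fixed k. -/

import Mathlib

open Filter

/-- `σ-lim y = η`: the averages `(1/(n+1)) ∑_{i≤n} y (σ (ν+i))` tend to `η` uniformly in `ν`. -/
def SigmaLim (σ : ℕ → ℕ) (y : ℕ → ℝ) (η : ℝ) : Prop :=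
  ∀ ε > 0, ∃ N : ℕ, ∀ n ≥ N, ∀ ν : ℕ,
    |(1 / ((n : ℝ) + 1)) * ∑ i ∈ Finset.range (n + 1), y (σ (ν + i)) - η| ≤ ε

set_option maxHeartbeats 1000000 in
lemma key (σ : ℕ → ℕ) (a : ℕ → ℕ → ℝ) (C : ℝ)
    (hnorm : ∀ n, Summable (fun k => |a n k|) ∧ ∑' k, |a n k| ≤ C)
    (h1 : SigmaLim σ (fun n => ∑' k, a n k) 1)
    (h0 : ∀ k, SigmaLim σ (fun n => a n k) 0)
    (x : ℕ → ℝ) (l : ℝ) (M : ℝ) (hM : ∀ n, |x n| ≤ M)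
    (hx : Tendsto x atTop (nhds l)) :
    SigmaLim σ (fun n => ∑' k, a n k * x k) l := by
  have hC : 0 ≤ C := le_trans (tsum_nonneg (fun k => abs_nonneg _)) (hnorm 0).2
  set B := M + |l| with hBdef
  have hM0 : 0 ≤ M := (abs_nonneg _).trans (hM 0)
  have hB0 : 0 ≤ B := add_nonneg hM0 (abs_nonneg _)
  have hxB : ∀ k, |x k - l| ≤ B := fun k =>
    (abs_sub _ _).trans (add_le_add (hM k) le_rfl)
  have hSa : ∀ n, Summable (fun k => a n k) := fun n => summable_abs_iff.mp (hnorm n).1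
  have hSx : ∀ n, Summable (fun k => a n k * (x k - l)) := by
    intro n
    apply summable_abs_iff.mp
    apply Summable.of_nonneg_of_le (fun k => abs_nonneg _) (fun k => ?_) ((hnorm n).1.mul_right B)
    rw [abs_mul]
    exact mul_le_mul_of_nonneg_left (hxB k) (abs_nonneg _)
  intro ε hε
  obtain ⟨N1, hN1⟩ := h1 (ε/3/(|l|+1)) (by positivity)
  set ε' := ε/3/(C+1) with hε'def
  have hε' : 0 < ε' := by positivity
  obtain ⟨K, hK⟩ : ∃ K, ∀ k ≥ K, |x k - l| ≤ ε' := by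
    obtain ⟨K, hK⟩ := Metric.tendsto_atTop.mp hx ε' hε'
    exact ⟨K, fun k hk => le_of_lt (by simpa [Real.dist_eq] using hK k hk)⟩
  set ε1 := ε/3/(K*B+1) with hε1def
  have hε1 : 0 < ε1 := by positivity
  have hchoice := fun k => h0 k ε1 hε1
  choose Nf hNf using hchoice
  refine ⟨max N1 ((Finset.range K).sup Nf), fun n hn ν => ?_⟩
  have hnN1 : n ≥ N1 := le_trans (le_max_left _ _) hn
  have hnN2 : ∀ k < K, n ≥ Nf k := fun k hk =>
    le_trans (Finset.le_sup (Finset.mem_range.mpr hk)) (le_trans (le_max_right _ _) hn)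
  set s := Finset.range (n+1) with hsdef
  set c : ℝ := 1/((n:ℝ)+1) with hcdef
  have hnpos : (0:ℝ) < (n:ℝ)+1 := by positivity
  have hcpos : 0 < c := by positivity
  have hc1 : c * ((n:ℝ)+1) = 1 := by rw [hcdef]; field_simp
  set b : ℕ → ℝ := fun k => c * ∑ i ∈ s, a (σ (ν+i)) k with hbdef
  have hSb : Summable (fun k => ∑ i ∈ s, a (σ (ν+i)) k) :=
    summable_sum (fun i _ => hSa _)
  have hSbb : Summable b := hSb.mul_left c
  have hSabs : Summable (fun k => ∑ i ∈ s, |a (σ (ν+i)) k|) :=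
    summable_sum (fun i _ => (hnorm _).1)
  have hbabs : Summable (fun k => |b k|) := hSbb.abs
  have hbC : ∑' k, |b k| ≤ C := by
    calc ∑' k, |b k| ≤ ∑' k, c * ∑ i ∈ s, |a (σ (ν+i)) k| := by
          refine Summable.tsum_le_tsum (fun k => ?_) hbabs (hSabs.mul_left c)
          rw [hbdef, abs_mul, abs_of_pos hcpos]
          exact mul_le_mul_of_nonneg_left (Finset.abs_sum_le_sum_abs _ _) hcpos.le
      _ = c * ∑ i ∈ s, ∑' k, |a (σ (ν+i)) k| := by
          rw [tsum_mul_left, Summable.tsum_finsetSum (fun i _ => (hnorm _).1)]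
      _ ≤ c * ∑ i ∈ s, C :=
          mul_le_mul_of_nonneg_left (Finset.sum_le_sum fun i _ => (hnorm _).2) hcpos.le
      _ = C := by
          rw [Finset.sum_const, Finset.card_range, nsmul_eq_mul, ← mul_assoc]
          push_cast
          rw [hc1, one_mul]
  have hrow : ∀ m, ∑' k, a m k * x k
      = (∑' k, a m k * (x k - l)) + (∑' k, a m k) * l := by
    intro m
    calc ∑' k, a m k * x k = ∑' k, (a m k * (x k - l) + a m k * l) :=
          tsum_congr (fun k => by ring)
      _ = (∑' k, a m k * (x k - l)) + (∑' k, a m k * l) :=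
          Summable.tsum_add (hSx m) ((hSa m).mul_right l)
      _ = (∑' k, a m k * (x k - l)) + (∑' k, a m k) * l := by rw [tsum_mul_right]
  have hsplit : c * ∑ i ∈ s, (∑' k, a (σ (ν+i)) k * x k) - l
      = (∑' k, b k * (x k - l)) + (c * ∑ i ∈ s, (∑' k, a (σ (ν+i)) k) - 1) * l := by
    have h2 : ∑ i ∈ s, (∑' k, a (σ (ν+i)) k * x k)
        = ∑ i ∈ s, (∑' k, a (σ (ν+i)) k * (x k - l))
          + (∑ i ∈ s, (∑' k, a (σ (ν+i)) k)) * l := by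
      rw [Finset.sum_congr rfl (fun i _ => hrow _), Finset.sum_add_distrib, Finset.sum_mul]
    have h3 : c * ∑ i ∈ s, (∑' k, a (σ (ν+i)) k * (x k - l)) = ∑' k, b k * (x k - l) := by
      rw [← Summable.tsum_finsetSum (fun i _ => hSx _), ← tsum_mul_left]
      refine tsum_congr (fun k => ?_)
      rw [← Finset.sum_mul, hbdef]
      ring
    rw [h2, mul_add, h3]
    ring
  have hgoal : |c * ∑ i ∈ s, (∑' k, a (σ (ν+i)) k * x k) - l| ≤ ε := by
    rw [hsplit]
    have hg : Summable (fun k => |b k| * |x k - l|) := by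
      refine Summable.of_nonneg_of_le (fun k => mul_nonneg (abs_nonneg _) (abs_nonneg _))
        (fun k => ?_) (hbabs.mul_right B)
      exact mul_le_mul_of_nonneg_left (hxB k) (abs_nonneg _)
    have habsA : |∑' k, b k * (x k - l)| ≤ ∑' k, |b k| * |x k - l| := by
      have h := norm_tsum_le_tsum_norm (f := fun k => b k * (x k - l))
        (by simpa [Real.norm_eq_abs, abs_mul] using hg)
      calc |∑' k, b k * (x k - l)| ≤ ∑' k, ‖b k * (x k - l)‖ := by
            simpa [Real.norm_eq_abs] using h
        _ = ∑' k, |b k| * |x k - l| := tsum_congr (fun k => by rw [Real.norm_eq_abs, abs_mul])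
    have hsplitK : ∑' k, |b k| * |x k - l|
        = ∑ k ∈ Finset.range K, |b k| * |x k - l| + ∑' j, |b (j+K)| * |x (j+K) - l| :=
      (hg.sum_add_tsum_nat_add K).symm
    have hhead : ∑ k ∈ Finset.range K, |b k| * |x k - l| ≤ K * (ε1 * B) := by
      have hterm : ∀ k ∈ Finset.range K, |b k| * |x k - l| ≤ ε1 * B := by
        intro k hk
        have hb1 : |b k| ≤ ε1 := by
          have := hNf k n (hnN2 k (Finset.mem_range.mp hk)) ν
          simpa [hbdef, hcdef, hsdef] using this
        exact mul_le_mul hb1 (hxB k) (abs_nonneg _) hε1.le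
      calc ∑ k ∈ Finset.range K, |b k| * |x k - l| ≤ ∑ _k ∈ Finset.range K, (ε1 * B) :=
            Finset.sum_le_sum hterm
        _ = K * (ε1 * B) := by rw [Finset.sum_const, Finset.card_range, nsmul_eq_mul]
    have hheadε : (K:ℝ) * (ε1 * B) ≤ ε/3 := by
      have h1 : (0:ℝ) ≤ (K:ℝ)*B := by positivity
      have hpos : (0:ℝ) < (K:ℝ)*B+1 := by linarith
      have heq : (K:ℝ) * (ε1 * B) = (ε/3) * (((K:ℝ)*B)/((K:ℝ)*B+1)) := by
        rw [hε1def]; field_simp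
      have h2 : ((K:ℝ)*B)/((K:ℝ)*B+1) ≤ 1 := by rw [div_le_one hpos]; linarith
      have h3 : (0:ℝ) ≤ ((K:ℝ)*B)/((K:ℝ)*B+1) := div_nonneg h1 hpos.le
      rw [heq]
      nlinarith
    have htailb : ∑' j, |b (j+K)| ≤ C := by
      have := hbabs.sum_add_tsum_nat_add K
      have hh : 0 ≤ ∑ k ∈ Finset.range K, |b k| := Finset.sum_nonneg (fun k _ => abs_nonneg _)
      linarith
    have htail : ∑' j, |b (j+K)| * |x (j+K) - l| ≤ C * ε' := by
      calc ∑' j, |b (j+K)| * |x (j+K) - l| ≤ ∑' j, |b (j+K)| * ε' := by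
            refine Summable.tsum_le_tsum (fun j => ?_) ((summable_nat_add_iff K).mpr hg)
              (((summable_nat_add_iff K).mpr hbabs).mul_right ε')
            exact mul_le_mul_of_nonneg_left (hK (j+K) (Nat.le_add_left _ _)) (abs_nonneg _)
        _ = (∑' j, |b (j+K)|) * ε' := tsum_mul_right
        _ ≤ C * ε' := mul_le_mul_of_nonneg_right htailb hε'.le
    have htailε : C * ε' ≤ ε/3 := by
      have hpos : (0:ℝ) < C+1 := by linarith
      have heq : C * ε' = (ε/3) * (C/(C+1)) := by rw [hε'def]; field_simp
      have h2 : C/(C+1) ≤ 1 := by rw [div_le_one hpos]; linarith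
      have h3 : (0:ℝ) ≤ C/(C+1) := div_nonneg hC hpos.le
      rw [heq]
      nlinarith
    have hA : |∑' k, b k * (x k - l)| ≤ ε/3 + ε/3 := by
      calc |∑' k, b k * (x k - l)| ≤ ∑' k, |b k| * |x k - l| := habsA
        _ = _ := hsplitK
        _ ≤ K * (ε1 * B) + C * ε' := add_le_add hhead htail
        _ ≤ ε/3 + ε/3 := add_le_add hheadε htailε
    have hD : |(c * ∑ i ∈ s, (∑' k, a (σ (ν+i)) k) - 1) * l| ≤ ε/3 := by
      rw [abs_mul]
      have hd1 : |c * ∑ i ∈ s, (∑' k, a (σ (ν+i)) k) - 1| ≤ ε/3/(|l|+1) := by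
        have := hN1 n hnN1 ν
        simpa [hcdef, hsdef] using this
      calc |c * ∑ i ∈ s, (∑' k, a (σ (ν+i)) k) - 1| * |l|
          ≤ (ε/3/(|l|+1)) * (|l|+1) := by
            apply mul_le_mul hd1 (by linarith [abs_nonneg l]) (abs_nonneg _) (by positivity)
        _ = ε/3 := by field_simp
    calc |(∑' k, b k * (x k - l)) + (c * ∑ i ∈ s, (∑' k, a (σ (ν+i)) k) - 1) * l|
        ≤ |∑' k, b k * (x k - l)| + |(c * ∑ i ∈ s, (∑' k, a (σ (ν+i)) k) - 1) * l| :=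
          abs_add_le _ _
      _ ≤ (ε/3 + ε/3) + ε/3 := add_le_add hA hD
      _ = ε := by ring
  simpa [hcdef, hsdef] using hgoal


/-- Schaefer's characterization of σ-regular matrices. -/
theorem stmt18 (σ : ℕ → ℕ) (hinj : Function.Injective σ)
    (hper : ∀ n p : ℕ, σ^[p + 1] n ≠ n)
    (a : ℕ → ℕ → ℝ) (C : ℝ)
    (hnorm : ∀ n, Summable (fun k => |a n k|) ∧ ∑' k, |a n k| ≤ C) :
    (∀ x : ℕ → ℝ, ∀ l : ℝ, (∃ M, ∀ n, |x n| ≤ M) → Tendsto x atTop (nhds l) →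
        SigmaLim σ (fun n => ∑' k, a n k * x k) l) ↔
      (SigmaLim σ (fun n => ∑' k, a n k) 1 ∧
        ∀ k, SigmaLim σ (fun n => a n k) 0) := by
  constructor
  · intro h
    constructor
    · have h1 := h (fun _ => 1) 1 ⟨1, fun n => by norm_num⟩ tendsto_const_nhds
      have he : (fun n => ∑' k, a n k * (1:ℝ)) = fun n => ∑' k, a n k := by
        funext n; exact tsum_congr (fun k => mul_one _)
      rwa [he] at h1
    · intro k
      have hb : ∀ j, |(if j = k then (1:ℝ) else 0)| ≤ 1 := by
        intro j; split <;> norm_num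
      have ht : Tendsto (fun j => if j = k then (1:ℝ) else 0) atTop (nhds 0) := by
        apply Tendsto.congr' _ (tendsto_const_nhds (x := (0:ℝ)))
        filter_upwards [eventually_gt_atTop k] with j hj
        rw [if_neg (Nat.ne_of_gt hj)]
      have h1 := h (fun j => if j = k then (1:ℝ) else 0) 0 ⟨1, hb⟩ ht
      have he : (fun n => ∑' j, a n j * (if j = k then (1:ℝ) else 0)) = fun n => a n k := by
        funext n
        rw [show (fun j => a n j * (if j = k then (1:ℝ) else 0))
            = fun j => if j = k then a n k else 0 by
          funext j; split <;> simp_all]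
        exact tsum_ite_eq k (fun _ => a n k)
      rwa [he] at h1
  · rintro ⟨h1, h0⟩ x l ⟨M, hM⟩ hx
    exact key σ a C hnorm h1 h0 x l M hM hx
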